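/- Let n ≥ 2 be an integer which is not a perfect square and let λ = √n. Then Γ_λ/(1−λ)Γ_λ ≅ ℤ/(n−1)ℤ, where Γ_λ = (ℤ[λ,λ⁻¹],+) and (1−λ)Γ_λ = {(1−λ)x : x ∈ Γ_λ}. -/

import Mathlib

/-- Let `n ≥ 2` be an integer which is not a perfect square and let
`λ = √n`.  Then `Γ_λ/(1−λ)Γ_λ ≅ ℤ/(n−1)ℤ`, where `Γ_λ` is (the additive group of) the
subring of `ℝ` generated by `λ` and `λ⁻¹`, and `(1−λ)Γ_λ = {(1−λ)x : x ∈ Γ_λ}`. -/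
theorem coker_sqrt_eq_zmod (n : ℕ) (hn : 2 ≤ n) (hsq : ¬IsSquare n) :
    Nonempty
      ((↥(Subring.closure {Real.sqrt n, (Real.sqrt n)⁻¹}) ⧸
          (AddMonoidHom.mulLeft
            (1 - (⟨Real.sqrt n, Subring.subset_closure (Set.mem_insert _ _)⟩ :
              Subring.closure {Real.sqrt n, (Real.sqrt n)⁻¹}))).range) ≃+
        ZMod (n - 1)) := by
  have hn0 : (0:ℝ) ≤ (n:ℝ) := by positivity
  set l : ℝ := Real.sqrt n with hldef
  have hl2 : l * l = (n:ℝ) := Real.mul_self_sqrt hn0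
  have hlirr : Irrational l := irrational_sqrt_natCast_iff.mpr hsq
  have hl0 : l ≠ 0 := by
    intro h; rw [h] at hl2; simp at hl2
    have : (2:ℝ) ≤ (n:ℝ) := by exact_mod_cast hn
    linarith
  -- integer independence of 1, l
  have hind : ∀ a b : ℤ, (a:ℝ) + (b:ℝ) * l = 0 → a = 0 ∧ b = 0 := by
    intro a b h
    by_cases hb : b = 0
    · subst hb; simp at h; exact ⟨by exact_mod_cast h, rfl⟩
    · exfalso
      apply hlirr
      refine ⟨(-a)/b, ?_⟩
      have hbR : (b:ℝ) ≠ 0 := Int.cast_ne_zero.mpr hb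
      push_cast
      field_simp
      linarith
  set Γ := Subring.closure {l, l⁻¹} with hΓ
  -- representation lemma
  have hrep : ∀ x ∈ Γ, ∃ a b : ℤ, ∃ k : ℕ, x * (n:ℝ)^k = (a:ℝ) + (b:ℝ) * l := by
    intro x hx
    induction hx using Subring.closure_induction with
    | mem x hx =>
      rcases hx with h | h
      · exact ⟨0, 1, 0, by simp [h]⟩
      · refine ⟨0, 1, 1, ?_⟩
        simp only [Set.mem_singleton_iff] at h
        subst h
        rw [← hl2]
        field_simp
        simp
    | zero => exact ⟨0, 0, 0, by simp⟩
    | one => exact ⟨1, 0, 0, by simp⟩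
    | add x y hx hy ihx ihy =>
      obtain ⟨a, b, k, h1⟩ := ihx
      obtain ⟨c, d, j, h2⟩ := ihy
      refine ⟨a * n^j + c * n^k, b * n^j + d * n^k, k + j, ?_⟩
      have : (x + y) * (n:ℝ)^(k+j) = (x * (n:ℝ)^k) * (n:ℝ)^j + (y * (n:ℝ)^j) * (n:ℝ)^k := by
        ring
      rw [this, h1, h2]; push_cast; ring
    | neg x hx ihx =>
      obtain ⟨a, b, k, h1⟩ := ihx
      exact ⟨-a, -b, k, by push_cast; rw [neg_mul, h1]; ring⟩
    | mul x y hx hy ihx ihy =>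
      obtain ⟨a, b, k, h1⟩ := ihx
      obtain ⟨c, d, j, h2⟩ := ihy
      refine ⟨a * c + b * d * n, a * d + b * c, k + j, ?_⟩
      have : (x * y) * (n:ℝ)^(k+j) = (x * (n:ℝ)^k) * (y * (n:ℝ)^j) := by ring
      rw [this, h1, h2]
      push_cast
      linear_combination (b:ℝ) * (d:ℝ) * hl2
  -- congruence-to-integer lemma
  have hcong : ∀ x ∈ Γ, ∃ m : ℤ, ∃ y ∈ Γ, x - (m:ℝ) = (1 - l) * y := by
    intro x hx
    induction hx using Subring.closure_induction with
    | mem x hx =>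
      rcases hx with h | h
      · exact ⟨1, -1, neg_mem (one_mem _), by
          subst h; push_cast; ring⟩
      · simp only [Set.mem_singleton_iff] at h
        refine ⟨1, l⁻¹, Subring.subset_closure (Set.mem_insert_of_mem _ rfl), ?_⟩
        subst h; push_cast; field_simp
    | zero => exact ⟨0, 0, zero_mem _, by simp⟩
    | one => exact ⟨1, 0, zero_mem _, by simp⟩
    | add x y hx hy ihx ihy =>
      obtain ⟨m1, y1, hy1, h1⟩ := ihx
      obtain ⟨m2, y2, hy2, h2⟩ := ihy
      refine ⟨m1 + m2, y1 + y2, add_mem hy1 hy2, ?_⟩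
      push_cast
      rw [show x + y - ((m1:ℝ) + m2) = (x - m1) + (y - m2) by ring, h1, h2]; ring
    | neg x hx ihx =>
      obtain ⟨m1, y1, hy1, h1⟩ := ihx
      refine ⟨-m1, -y1, neg_mem hy1, ?_⟩
      push_cast
      rw [show -x - -(m1:ℝ) = -(x - m1) by ring, h1]; ring
    | mul x y hx hy ihx ihy =>
      obtain ⟨m1, y1, hy1, h1⟩ := ihx
      obtain ⟨m2, y2, hy2, h2⟩ := ihy
      refine ⟨m1 * m2, x * y2 + (m2:ℝ) * y1,
        add_mem (mul_mem hx hy2) (mul_mem (intCast_mem _ m2) hy1), ?_⟩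
      push_cast
      rw [show x * y - (m1:ℝ) * m2 = x * (y - m2) + (m2:ℝ) * (x - m1) by ring, h1, h2]; ring
  -- kernel computation
  have hker : ∀ m : ℤ, (∃ x ∈ Γ, (m:ℝ) = (1 - l) * x) → ((n - 1 : ℕ) : ℤ) ∣ m := by
    intro m ⟨x, hx, hmx⟩
    obtain ⟨a, b, k, h1⟩ := hrep x hx
    have key : ((m * n^k - a + b * n : ℤ) : ℝ) + ((a - b : ℤ) : ℝ) * l = 0 := by
      push_cast
      have : (m:ℝ) * (n:ℝ)^k = (1 - l) * (x * (n:ℝ)^k) := by rw [hmx]; ring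
      rw [h1] at this
      linear_combination this - (b:ℝ) * hl2
    obtain ⟨e1, e2⟩ := hind _ _ key
    have hab : a = b := by omega
    have hmk : m * n^k = -a * (n - 1) := by
      have hn1 : (1:ℤ) ≤ (n:ℤ) := by exact_mod_cast Nat.one_le_of_lt hn
      nlinarith [e1]
    have hdvd : ((n:ℤ) - 1) ∣ m * (n:ℤ)^k := ⟨-a, by linarith [hmk]⟩
    have hcop : IsCoprime ((n:ℤ) - 1) ((n:ℤ)^k) := by
      apply IsCoprime.pow_right
      exact ⟨-1, 1, by ring⟩
    have : ((n:ℤ) - 1) ∣ m := hcop.dvd_of_dvd_mul_right hdvd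
    have hcast : ((n - 1 : ℕ) : ℤ) = (n:ℤ) - 1 := by omega
    rw [hcast]; exact this
  -- build the map
  set lam : Γ := ⟨l, Subring.subset_closure (Set.mem_insert _ _)⟩ with hlam
  set H := (AddMonoidHom.mulLeft (1 - lam)).range with hH
  set Q := (↥Γ ⧸ H) with hQ
  set g : ℤ →+ Q := (QuotientAddGroup.mk' H).comp (zmultiplesHom _ (1 : Γ)) with hg
  have hg_apply : ∀ m : ℤ, g m = QuotientAddGroup.mk' H (m • (1 : Γ)) := fun m => rfl
  have hgn : g ((n - 1 : ℕ) : ℤ) = 0 := by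
    rw [hg_apply, QuotientAddGroup.mk'_apply, QuotientAddGroup.eq_zero_iff]
    refine ⟨-(1 + lam), ?_⟩
    simp only [AddMonoidHom.coe_mulLeft]
    apply Subtype.ext
    push_cast [hlam, AddSubgroupClass.coe_zsmul, zsmul_eq_mul, Nat.cast_sub (by omega : 1 ≤ n)]
    linear_combination hl2
  set f : ZMod (n - 1) →+ Q := ZMod.lift (n - 1) ⟨g, hgn⟩ with hf
  haveI : NeZero (n - 1) := ⟨by omega⟩
  have hsurj : Function.Surjective f := by
    intro q
    obtain ⟨x, rfl⟩ := QuotientAddGroup.mk'_surjective H q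
    obtain ⟨m, y, hy, hxy⟩ := hcong (x : ℝ) x.2
    refine ⟨((m : ℤ) : ZMod (n - 1)), ?_⟩
    rw [hf, ZMod.lift_coe, hg_apply, QuotientAddGroup.mk'_apply, QuotientAddGroup.mk'_apply,
      QuotientAddGroup.eq]
    refine ⟨⟨y, hy⟩, ?_⟩
    simp only [AddMonoidHom.coe_mulLeft]
    apply Subtype.ext
    push_cast [hlam, AddSubgroupClass.coe_zsmul, zsmul_eq_mul]
    linear_combination -hxy
  have hinj : Function.Injective f := by
    rw [injective_iff_map_eq_zero]
    intro z hz
    have hzval : z = ((z.val : ℤ) : ZMod (n - 1)) := by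
      rw [Int.cast_natCast, ZMod.natCast_rightInverse z]
    rw [hzval, hf, ZMod.lift_coe, hg_apply, QuotientAddGroup.mk'_apply,
      QuotientAddGroup.eq_zero_iff] at hz
    obtain ⟨x, hx⟩ := hz
    have hxr : ((z.val : ℤ) : ℝ) = (1 - l) * (x : ℝ) := by
      have := congrArg (fun t : Γ => (t : ℝ)) hx
      simp only [AddMonoidHom.coe_mulLeft] at this
      push_cast [hlam, AddSubgroupClass.coe_zsmul, zsmul_eq_mul] at this
      linear_combination -this
    have := hker (z.val : ℤ) ⟨(x : ℝ), x.2, hxr⟩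
    rw [hzval]
    rwa [ZMod.intCast_zmod_eq_zero_iff_dvd]
  exact ⟨(AddEquiv.ofBijective f ⟨hinj, hsurj⟩).symm⟩
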